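/- Let Ω ⊆ ℝ^N be a domain, a bounded continuous on Ω, J a nonnegative continuous probability density on ℝ^N, and for σ > 0, m ≥ 0 define (M_{σ,m,Ω}φ)(x) = σ^{−m}( σ^{−N} ∫_Ω J((x−y)/σ) φ(y) dy − φ(x) ). Then for all σ > 0, −sup_Ω a ≤ λ_p(M_{σ,m,Ω} + a) ≤ σ^{−m} − sup_Ω a. In particular, for 0 < m ≤ 2, lim_{σ→+∞} λ_p(M_{σ,m,Ω} + a) = −sup_Ω a. -/
import Mathlib


open MeasureTheory Filter Metric Set
open scoped Topology

noncomputable section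

/-- Principal eigenvalue admissible set for the rescaled nonlocal operator
`M_{σ,m,Ω} φ (x) = σ^{-m} (σ^{-N} ∫_Ω J((x−y)/σ) φ(y) dy − φ(x))`. -/
def lamSetM (N : ℕ) (σ m : ℝ) (Ω : Set (EuclideanSpace ℝ (Fin N)))
    (J : EuclideanSpace ℝ (Fin N) → ℝ)
    (a : EuclideanSpace ℝ (Fin N) → ℝ) : Set ℝ :=
  {l | ∃ φ : EuclideanSpace ℝ (Fin N) → ℝ, ContinuousOn φ Ω ∧ (∀ x ∈ Ω, 0 < φ x) ∧
    ∀ x ∈ Ω, σ ^ (-m) * ((σ ^ N)⁻¹ * (∫ y in Ω, J (σ⁻¹ • (x - y)) * φ y) - φ x)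
      + (a x + l) * φ x ≤ 0}

/-- Bounds `−sup_Ω a ≤ λ_p(M_{σ,m,Ω} + a) ≤ σ^{−m} − sup_Ω a` for all `σ > 0`,
and, when `0 < m ≤ 2`, the limit `λ_p(M_{σ,m,Ω} + a) → −sup_Ω a` as `σ → ∞`. -/
theorem stmt13 (N : ℕ) (m : ℝ) (hm : 0 ≤ m)
    (Ω : Set (EuclideanSpace ℝ (Fin N)))
    (hΩo : IsOpen Ω) (hΩc : IsConnected Ω) (hΩne : Ω.Nonempty)
    (J : EuclideanSpace ℝ (Fin N) → ℝ)
    (hJc : Continuous J) (hJ0 : ∀ z, 0 ≤ J z)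
    (hJi : Integrable J) (hJ1 : ∫ z, J z = 1)
    (a : EuclideanSpace ℝ (Fin N) → ℝ)
    (hac : ContinuousOn a Ω) (haB : ∃ M, ∀ x ∈ Ω, |a x| ≤ M) :
    (∀ σ : ℝ, 0 < σ →
      -sSup (a '' Ω) ≤ sSup (lamSetM N σ m Ω J a) ∧
      sSup (lamSetM N σ m Ω J a) ≤ σ ^ (-m) - sSup (a '' Ω)) ∧
    (0 < m → m ≤ 2 →
      Tendsto (fun σ : ℝ => sSup (lamSetM N σ m Ω J a)) atTop (𝓝 (-sSup (a '' Ω)))) := by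
  obtain ⟨M, hM⟩ := haB
  set S := sSup (a '' Ω) with hS
  have hne : (a '' Ω).Nonempty := hΩne.image a
  have hbdd : BddAbove (a '' Ω) := ⟨M, by rintro _ ⟨x, hx, rfl⟩; exact (abs_le.1 (hM x hx)).2⟩
  have haS : ∀ x ∈ Ω, a x ≤ S := fun x hx => le_csSup hbdd ⟨x, hx, rfl⟩
  -- the key integral bound: ∫_Ω J(σ⁻¹•(x−y)) dy ≤ σ^N
  have key : ∀ σ : ℝ, 0 < σ → ∀ x, (∫ y in Ω, J (σ⁻¹ • (x - y))) ≤ σ ^ N := by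
    intro σ hσ x
    have hfeq : (fun y : EuclideanSpace ℝ (Fin N) => J (σ⁻¹ • (x - y)))
        = fun y => (fun z => J (σ⁻¹ • x - z)) (σ⁻¹ • y) := by
      funext y; simp [smul_sub]
    have h1 : Integrable (fun z : EuclideanSpace ℝ (Fin N) => J (σ⁻¹ • x - z)) :=
      hJi.comp_sub_left (σ⁻¹ • x)
    have hint : Integrable (fun y : EuclideanSpace ℝ (Fin N) => J (σ⁻¹ • (x - y))) := by
      rw [hfeq]; exact h1.comp_smul (inv_ne_zero hσ.ne')
    have hle := setIntegral_le_integral (s := Ω) hint (Filter.Eventually.of_forall fun y => hJ0 _)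
    have heq : (∫ y, J (σ⁻¹ • (x - y))) = σ ^ N := by
      rw [hfeq, Measure.integral_comp_inv_smul_of_nonneg volume (fun z => J (σ⁻¹ • x - z)) hσ.le,
        integral_sub_left_eq_self, hJ1]
      simp [finrank_euclideanSpace_fin]
    calc (∫ y in Ω, J (σ⁻¹ • (x - y))) ≤ ∫ y, J (σ⁻¹ • (x - y)) := hle
      _ = σ ^ N := heq
  -- membership of -S via the constant test function 1
  have hmem : ∀ σ : ℝ, 0 < σ → (-S) ∈ lamSetM N σ m Ω J a := by
    intro σ hσ
    refine ⟨fun _ => 1, continuousOn_const, fun x hx => one_pos, fun x hx => ?_⟩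
    simp only [mul_one]
    have h1 : (∫ y in Ω, J (σ⁻¹ • (x - y))) ≤ σ ^ N := key σ hσ x
    have hσN : (0:ℝ) < σ ^ N := pow_pos hσ N
    have h2 : (σ ^ N)⁻¹ * (∫ y in Ω, J (σ⁻¹ • (x - y))) - 1 ≤ 0 := by
      have h := mul_le_mul_of_nonneg_left h1 (inv_nonneg.2 hσN.le)
      rw [inv_mul_cancel₀ hσN.ne'] at h
      linarith
    have h3 : (0:ℝ) ≤ σ ^ (-m) := Real.rpow_nonneg hσ.le _
    have h4 := haS x hx
    nlinarith [mul_nonneg h3 (neg_nonneg.2 h2)]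
  -- upper bound for every element of the set
  have hub : ∀ σ : ℝ, 0 < σ → ∀ l ∈ lamSetM N σ m Ω J a, l ≤ σ ^ (-m) - S := by
    intro σ hσ l hl
    obtain ⟨φ, hφc, hφp, hφ⟩ := hl
    have hax : ∀ x ∈ Ω, a x ≤ σ ^ (-m) - l := by
      intro x hx
      have h1 := hφ x hx
      have hI : 0 ≤ (σ ^ N)⁻¹ * (∫ y in Ω, J (σ⁻¹ • (x - y)) * φ y) := by
        refine mul_nonneg (inv_nonneg.2 (pow_pos hσ N).le) ?_
        exact setIntegral_nonneg hΩo.measurableSet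
          fun y hy => mul_nonneg (hJ0 _) (hφp y hy).le
      have h3 : (0:ℝ) ≤ σ ^ (-m) := Real.rpow_nonneg hσ.le _
      have h5 : (a x + l - σ ^ (-m)) * φ x ≤ 0 := by
        nlinarith [mul_nonneg h3 hI]
      have hp := hφp x hx
      nlinarith
    have hSle : S ≤ σ ^ (-m) - l :=
      csSup_le hne (by rintro _ ⟨x, hx, rfl⟩; exact hax x hx)
    linarith
  have hpart1 : ∀ σ : ℝ, 0 < σ →
      -S ≤ sSup (lamSetM N σ m Ω J a) ∧
      sSup (lamSetM N σ m Ω J a) ≤ σ ^ (-m) - S := by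
    intro σ hσ
    have h1 : BddAbove (lamSetM N σ m Ω J a) := ⟨σ ^ (-m) - S, fun l hl => hub σ hσ l hl⟩
    exact ⟨le_csSup h1 (hmem σ hσ), csSup_le ⟨-S, hmem σ hσ⟩ (hub σ hσ)⟩
  refine ⟨hpart1, fun hm0 _ => ?_⟩
  have hupT : Tendsto (fun σ : ℝ => σ ^ (-m) - S) atTop (𝓝 (-S)) := by
    have := (tendsto_rpow_neg_atTop hm0).sub_const S
    simpa using this
  refine tendsto_of_tendsto_of_tendsto_of_le_of_le' tendsto_const_nhds hupT ?_ ?_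
  · filter_upwards [eventually_gt_atTop (0:ℝ)] with σ hσ using (hpart1 σ hσ).1
  · filter_upwards [eventually_gt_atTop (0:ℝ)] with σ hσ using (hpart1 σ hσ).2
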